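/- Let b ∈ (0,1), c, τ > 0, and suppose χ₀ has positive real zeros (i.e., c ≥ c_*(τ)); let λ₂ denote the smallest positive real zero of χ₀. Then every complex zero z of χ₀ lying in the half-plane Re z > ln b/(cτ) that is not a positive real number satisfies Re z < λ₂. -/

import Mathlib

open Complex

/-- Characteristic function χ₀ on the reals. -/
noncomputable def chi0 (b c τ z : ℝ) : ℝ :=
  z ^ 2 - c * z + 1 / (1 - b * Real.exp (-(z * c * τ)))

/-- Characteristic function χ₀ as a complex function. -/
noncomputable def chi0C (b c τ : ℝ) (z : ℂ) : ℂ :=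
  z ^ 2 - (c : ℂ) * z + 1 / (1 - (b : ℂ) * Complex.exp (-(z * (c : ℂ) * (τ : ℂ))))

lemma mul_sin_le_aux (y a : ℝ) (ha : 0 ≤ a) : y * Real.sin (y * a) ≤ a * y ^ 2 := by
  rcases le_total 0 y with h | h
  · have h1 := Real.sin_le (mul_nonneg h ha)
    nlinarith
  · have h1 := Real.sin_le (mul_nonneg (neg_nonneg.2 h) ha)
    rw [neg_mul, Real.sin_neg] at h1
    nlinarith

set_option maxHeartbeats 1000000 in
/-- If `χ₀` has positive real zeros with smallest positive real zero `λ₂`,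
then every complex zero of `χ₀` in the half-plane `Re z > ln b/(cτ)` that is not a positive
real number satisfies `Re z < λ₂`. -/
theorem complex_zeros_re_lt (b c τ l₂ : ℝ) (hb : b ∈ Set.Ioo (0 : ℝ) 1)
    (hc : 0 < c) (hτ : 0 < τ)
    (hl₂pos : 0 < l₂) (hl₂zero : chi0 b c τ l₂ = 0)
    (hl₂min : ∀ x : ℝ, 0 < x → chi0 b c τ x = 0 → l₂ ≤ x)
    (z : ℂ) (hre : Real.log b / (c * τ) < z.re) (hzero : chi0C b c τ z = 0)
    (hnotpos : ¬ ∃ x : ℝ, 0 < x ∧ z = (x : ℂ)) :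
    z.re < l₂ := by
  obtain ⟨hb0, hb1⟩ := hb
  set x := z.re with hx
  set y := z.im with hy
  by_cases hy0 : y = 0
  · by_contra hlt
    push_neg at hlt
    exact hnotpos ⟨x, lt_of_lt_of_le hl₂pos hlt, Complex.ext rfl (by simp [← hy, hy0])⟩
  · by_contra hlt
    push_neg at hlt
    have hx0 : 0 < x := lt_of_lt_of_le hl₂pos hlt
    have hct : 0 < c * τ := mul_pos hc hτ
    have hy2 : 0 < y * y := mul_self_pos.2 hy0
    -- real exponential quantities
    set q : ℝ := b * Real.exp (-(x * c * τ)) with hqdef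
    set p : ℝ := b * Real.exp (-(l₂ * c * τ)) with hpdef
    have hq0 : 0 < q := by positivity
    have hp0 : 0 < p := by positivity
    have hq1 : q < 1 := by
      have h1 : Real.exp (-(x * c * τ)) < 1 := by
        rw [Real.exp_lt_one_iff]
        have : 0 < x * c * τ := by positivity
        linarith only [this]
      have h2 : b * Real.exp (-(x * c * τ)) < 1 * 1 :=
        mul_lt_mul'' hb1 h1 hb0.le (Real.exp_pos _).le
      rw [hqdef]; linarith only [h2]
    have hp1 : p < 1 := by
      have h1 : Real.exp (-(l₂ * c * τ)) < 1 := by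
        rw [Real.exp_lt_one_iff]
        have : 0 < l₂ * c * τ := by positivity
        linarith only [this]
      have h2 : b * Real.exp (-(l₂ * c * τ)) < 1 * 1 :=
        mul_lt_mul'' hb1 h1 hb0.le (Real.exp_pos _).le
      rw [hpdef]; linarith only [h2]
    have hqp : q ≤ p := by
      have h1 : Real.exp (-(x * c * τ)) ≤ Real.exp (-(l₂ * c * τ)) := by
        apply Real.exp_le_exp.2
        nlinarith only [hlt, hct]
      rw [hqdef, hpdef]
      exact mul_le_mul_of_nonneg_left h1 hb0.le
    have h1q : 0 < 1 - q := by linarith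
    have h1p : 0 < 1 - p := by linarith
    set g : ℝ := (1 - q)⁻¹ with hgdef
    set gA : ℝ := (1 - p)⁻¹ with hgAdef
    have hg0 : 0 < g := by positivity
    have hgA0 : 0 < gA := by positivity
    -- complex side
    set E := Complex.exp (-(z * (c : ℂ) * (τ : ℂ))) with hE
    have hreE : (-(z * (c : ℂ) * (τ : ℂ))).re = -(x * c * τ) := by
      simp [Complex.mul_re, Complex.mul_im, hx]
    have himE : (-(z * (c : ℂ) * (τ : ℂ))).im = -(y * c * τ) := by
      simp [Complex.mul_re, Complex.mul_im, hy]
    have habsbE : ‖(b : ℂ) * E‖ = q := by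
      rw [norm_mul, Complex.norm_real, Real.norm_eq_abs, hE, Complex.norm_exp, hreE, abs_of_pos hb0]
    set d := 1 - (b : ℂ) * E with hd
    have habsd : 1 - q ≤ ‖d‖ := by
      have h := norm_sub_norm_le (1 : ℂ) ((b : ℂ) * E)
      rw [norm_one, habsbE] at h
      exact h
    have hd0 : d ≠ 0 := by
      intro h; rw [h] at habsd; simp at habsd; linarith
    set W := (c : ℂ) * z - z ^ 2 with hWdef
    have hW : d⁻¹ = W := by
      unfold chi0C at hzero
      rw [← hE] at hzero
      rw [← one_div]
      rw [hd]
      linear_combination hzero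
    have hW0 : W ≠ 0 := hW ▸ inv_ne_zero hd0
    have habsW : ‖W‖ ≤ g := by
      rw [← hW, norm_inv, hgdef]
      exact inv_anti₀ h1q habsd
    have hWre : W.re = c * x - (x * x - y * y) := by
      rw [hWdef]; simp [Complex.mul_re, pow_two, hx, hy]
    have hA : c * x - x * x + y * y ≤ g := by
      have h := Complex.re_le_norm W
      rw [hWre] at h; linarith [habsW]
    -- imaginary part
    have hWinv : W⁻¹ = d := by rw [← hW, inv_inv]
    have hWim : W.im = c * y - (x * y + y * x) := by
      rw [hWdef]; simp [Complex.mul_im, pow_two, hx, hy]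
    set N := Complex.normSq W with hN
    have hNpos : 0 < N := Complex.normSq_pos.2 hW0
    have hNle : N ≤ g ^ 2 := by
      rw [hN, ← Complex.sq_norm]
      exact pow_le_pow_left₀ (norm_nonneg W) habsW 2
    have hdim : d.im = b * Real.exp (-(x * c * τ)) * Real.sin (y * c * τ) := by
      rw [hd, hE]
      simp [Complex.mul_im, Complex.exp_im, hreE, himE]
      ring
    have hIm : q * Real.sin (y * c * τ) = (x * y + y * x - c * y) / N := by
      have h := congrArg Complex.im hWinv
      rw [Complex.inv_im, hWim, hdim, ← hqdef, ← hN] at h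
      field_simp at h ⊢
      linarith only [h]
    -- the real zero relation
    have hzA : l₂ ^ 2 - c * l₂ + gA = 0 := by
      unfold chi0 at hl₂zero
      rw [← hpdef, one_div, ← hgAdef] at hl₂zero
      exact hl₂zero
    -- forget definitional bodies
    clear_value x y q p g gA E d W N
    -- tangent-line (convexity) estimate via exp t ≥ 1 + t
    have hTexp : q * (1 + (x - l₂) * (c * τ)) ≤ p := by
      have he : Real.exp (-(l₂ * c * τ))
          = Real.exp (-(x * c * τ)) * Real.exp ((x - l₂) * (c * τ)) := by
        rw [← Real.exp_add]; ring_nf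
      have hle := Real.add_one_le_exp ((x - l₂) * (c * τ))
      rw [hqdef, hpdef, he]
      have h6 := mul_le_mul_of_nonneg_left hle
        (show (0:ℝ) ≤ b * Real.exp (-(x * c * τ)) by positivity)
      linarith only [h6]
    have hggA : g ≤ gA := by
      rw [hgdef, hgAdef]
      exact inv_anti₀ h1p (by linarith)
    have hgmul : g * (1 - q) = 1 := by rw [hgdef]; field_simp
    have hgAmul : gA * (1 - p) = 1 := by rw [hgAdef]; field_simp
    -- from now on, pure real arithmetic
    have hs := mul_sin_le_aux y (c * τ) hct.le
    have harg : y * (c * τ) = y * c * τ := by ring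
    rw [harg] at hs
    have hB : 2 * x - c ≤ q * (c * τ) * g ^ 2 := by
      have h2 : y * (q * Real.sin (y * c * τ)) = (2 * x - c) * (y * y) / N := by
        rw [hIm]; field_simp; ring
      have h3 : (2 * x - c) * (y * y) / N ≤ q * ((c * τ) * y ^ 2) := by
        rw [← h2]
        linarith only [mul_le_mul_of_nonneg_left hs hq0.le]
      have h4 : (2 * x - c) * (y * y) ≤ q * ((c * τ) * y ^ 2) * N :=
        (div_le_iff₀ hNpos).1 h3
      have h5 : q * ((c * τ) * y ^ 2) * N ≤ q * ((c * τ) * y ^ 2) * g ^ 2 :=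
        mul_le_mul_of_nonneg_left hNle
          (mul_nonneg hq0.le (mul_nonneg hct.le (sq_nonneg y)))
      nlinarith only [h4, h5, hy2]
    have s1 : gA - g = gA * g * (p - q) := by
      linear_combination g * hgAmul - gA * hgmul
    have s2 : (c * τ) * (x - l₂) * q ≤ p - q := by linarith only [hTexp]
    have hxl : (0:ℝ) ≤ x - l₂ := by linarith
    have s3 : g * g * (q * ((c * τ) * (x - l₂))) ≤ gA - g := by
      have t1 := mul_le_mul_of_nonneg_left s2 (mul_nonneg hgA0.le hg0.le)
      have t2 : g * g * (q * ((c * τ) * (x - l₂))) ≤ gA * g * ((c * τ) * (x - l₂) * q) := by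
        have hgg : g * g ≤ gA * g := mul_le_mul_of_nonneg_right hggA hg0.le
        have hnn : (0:ℝ) ≤ q * ((c * τ) * (x - l₂)) :=
          mul_nonneg hq0.le (mul_nonneg hct.le hxl)
        linarith only [mul_le_mul_of_nonneg_right hgg hnn]
      linarith only [s1, t1, t2]
    have s4 : (2 * x - c) * (x - l₂) ≤ q * (c * τ) * g ^ 2 * (x - l₂) :=
      mul_le_mul_of_nonneg_right hB hxl
    linarith only [hA, s3, s4, hzA, sq_nonneg (x - l₂), hy2]
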